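/- Let k ≥ 2, let G_k be a 3-regular bipartite graph on 2k vertices with bipartition into independent sets A and B of size k, and let H_k, Ĝ_k, Ĥ_k be as constructed. The following are equivalent: (1) G_k has a Hamiltonian cycle; (2) there exists σ ∈ Res(G_k, H_k) with MMC(σ) ≤ 2, where MMC(σ) is the maximum degree of a vertex of the mismatch graph G_k^σ − H_k; (3) there exists a bijection π : V(Ĝ_k) → V(Ĥ_k) with MMC(π) ≤ 2, where MMC(π) is the maximum degree of a vertex of the mismatch graph Ĝ_k^π − Ĥ_k (equivalently, δ_1(Ĝ_k, Ĥ_k) = δ_{|1|}(Ĝ_k, Ĥ_k) ≤ 2, since for the ℓ_1-operator norm μ_1(G^π,H) = μ_{|1|}(G^π,H) = MMC(π)). -/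

import Mathlib

open SimpleGraph

section MismatchDefs

variable {V W : Type*}

/-- The mismatch graph `G^π − H`: the symmetric difference of the image of `G` under the
bijection `π` with `H`, as a graph on `V(H)`. Its edges are the positive edges
(edges of `G^π` not in `H`) together with the negative edges (edges of `H` not in `G^π`). -/
def mismatchGraph (G : SimpleGraph V) (H : SimpleGraph W) (π : V ≃ W) : SimpleGraph W :=
  symmDiff (G.map π.toEmbedding) H

/-- The degree of a vertex in the mismatch graph `G^π − H`. -/
noncomputable def mismatchDeg (G : SimpleGraph V) (H : SimpleGraph W) (π : V ≃ W) (x : W) : ℕ :=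
  ((mismatchGraph G H π).neighborSet x).ncard

/-- The number of positive edges of `G^π − H` incident to `x`. -/
noncomputable def posDeg (G : SimpleGraph V) (H : SimpleGraph W) (π : V ≃ W) (x : W) : ℕ :=
  ((G.map π.toEmbedding).neighborSet x \ H.neighborSet x).ncard

/-- The number of negative edges of `G^π − H` incident to `x`. -/
noncomputable def negDeg (G : SimpleGraph V) (H : SimpleGraph W) (π : V ≃ W) (x : W) : ℕ :=
  (H.neighborSet x \ (G.map π.toEmbedding).neighborSet x).ncard

/-- The maximum mismatch count `MMC(π)`: the maximum degree of the mismatch graph `G^π − H`. -/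
noncomputable def MMC [Fintype W] (G : SimpleGraph V) (H : SimpleGraph W) (π : V ≃ W) : ℕ :=
  Finset.univ.sup (mismatchDeg G H π)

/-- The edit mismatch norm `μ_edit(G^π, H)`: the number of edges of the mismatch graph. -/
noncomputable def muEdit (G : SimpleGraph V) (H : SimpleGraph W) (π : V ≃ W) : ℕ :=
  (mismatchGraph G H π).edgeSet.ncard

/-- The edit distance `δ_edit(G, H)`: the minimum of `μ_edit(G^π, H)` over all bijections. -/
noncomputable def deltaEdit (G : SimpleGraph V) (H : SimpleGraph W) : ℕ :=
  ⨅ π : V ≃ W, muEdit G H π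

open Classical in
/-- The signed adjacency matrix of the mismatch graph `G^π − H`:
`+1` on positive edges, `−1` on negative edges, `0` otherwise. -/
noncomputable def signedAdj (G : SimpleGraph V) (H : SimpleGraph W) (π : V ≃ W) :
    Matrix W W ℝ := fun x y =>
  if (G.map π.toEmbedding).Adj x y ∧ ¬ H.Adj x y then 1
  else if H.Adj x y ∧ ¬ (G.map π.toEmbedding).Adj x y then -1 else 0

/-- The `ℓ_p` norm of a vector over a finite index type. -/
noncomputable def lpNorm [Fintype W] (p : ℝ) (x : W → ℝ) : ℝ :=
  (∑ i, |x i| ^ p) ^ p⁻¹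

/-- The `ℓ_p`-operator norm of a matrix: `sup_{x ≠ 0} ‖Mx‖_p / ‖x‖_p`. -/
noncomputable def lpOpNorm [Fintype W] (p : ℝ) (M : Matrix W W ℝ) : ℝ :=
  ⨆ x : {x : W → ℝ // x ≠ 0}, lpNorm p (M.mulVec x.1) / lpNorm p x.1

end MismatchDefs

/-- The graph `H_k` on vertex set `{0, 1, …, 2k−1}`: the Hamiltonian cycle
`0 − 1 − ⋯ − (2k−1) − 0` together with, for even `k`, the chords `{i, i+2}` for
`i ≡ 0, 1 (mod 4)`, and for odd `k`, the chords `{i, i−2}` for `i ≡ 2 (mod 4)`,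
`{i, i+2}` for `i ≡ 3 (mod 4)`, and `{2k−2, 1}`. -/
def Hk (k : ℕ) : SimpleGraph (Fin (2 * k)) :=
  SimpleGraph.fromRel (fun a b =>
    (b.val = a.val + 1) ∨ (a.val = 2 * k - 1 ∧ b.val = 0) ∨
    (if k % 2 = 0 then
      (a.val % 4 = 0 ∨ a.val % 4 = 1) ∧ b.val = a.val + 2
    else
      (a.val % 4 = 2 ∧ b.val = a.val - 2) ∨ (a.val % 4 = 3 ∧ b.val = a.val + 2) ∨
        (a.val = 2 * k - 2 ∧ b.val = 1)))

/-- Attach `5` new pendant leaves to every vertex satisfying `P` and `12` new pendant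
leaves to every other vertex. The leaves of `v` are `Sum.inr ⟨v, i⟩`. -/
def hatGraph {V : Type*} (G : SimpleGraph V) (P : V → Prop) [DecidablePred P] :
    SimpleGraph (V ⊕ Σ v : V, Fin (if P v then 5 else 12)) :=
  SimpleGraph.fromRel (fun a b =>
    match a, b with
    | Sum.inl u, Sum.inl v => G.Adj u v
    | Sum.inl u, Sum.inr x => u = x.1
    | _, _ => False)

/-- `σ ∈ Res(G_k, H_k)`: the bijection `σ` maps the independent set `A` onto the even
vertices `Even(2k)` (and hence its complement `B` onto the odd vertices `Odd(2k)`). -/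
def InRes {V : Type*} (k : ℕ) (A : Finset V) (σ : V ≃ Fin (2 * k)) : Prop :=
  ∀ v, v ∈ A ↔ (σ v).val % 2 = 0


----------------------------------------------------------------
-- Auxiliary development
----------------------------------------------------------------

section CycSection

namespace CycAux

variable {V : Type*} {G : SimpleGraph V}

lemma support_getElem {u v : V} (p : G.Walk u v) (i : ℕ) (h : i < p.support.length) :
    p.support[i] = p.getVert i := by
  induction p generalizing i with
  | nil => simp at h; simp [h]
  | cons ha q ih =>
    rcases i with _ | i
    · simp
    · simp only [Walk.support_cons, List.getElem_cons_succ, Walk.getVert_cons_succ]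
      exact ih i (by simpa [Walk.support_cons] using h)

/-- going down from `g m` to `g 0` -/
def walkDown (g : ℕ → V) (hg : ∀ j, G.Adj (g (j+1)) (g j)) : (m : ℕ) → G.Walk (g m) (g 0)
  | 0 => Walk.nil
  | m+1 => Walk.cons (hg m) (walkDown g hg m)

lemma walkDown_support (g : ℕ → V) (hg : ∀ j, G.Adj (g (j+1)) (g j)) (m : ℕ) :
    (walkDown (G := G) g hg m).support = ((List.range (m+1)).reverse).map g := by
  induction m with
  | zero => simp [walkDown, List.range_succ]
  | succ m ih => simp [walkDown, ih, List.range_succ]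

lemma walkDown_edges (g : ℕ → V) (hg : ∀ j, G.Adj (g (j+1)) (g j)) (m : ℕ) :
    (walkDown (G := G) g hg m).edges = ((List.range m).reverse).map (fun j => s(g (j+1), g j)) := by
  induction m with
  | zero => simp [walkDown]
  | succ m ih => simp [walkDown, ih, List.range_succ]

end CycAux

open CycAux in
lemma isHamiltonian_of_cyc {V : Type*} [DecidableEq V] [Fintype V] {G : SimpleGraph V} {n : ℕ}
    [NeZero n] (hn : 3 ≤ n) (f : Fin n → V) (hbij : Function.Bijective f)
    (hadj : ∀ i, G.Adj (f i) (f (i+1))) : G.IsHamiltonian := by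
  have h1n : (1 : ℕ) % n = 1 := Nat.mod_eq_of_lt (by omega)
  have key : ∀ (a b : Fin n), b.val = (a.val+1) % n → G.Adj (f a) (f b) := by
    intro a b hab
    have heq : a + 1 = b := Fin.ext (by rw [Fin.val_add, Fin.val_one', h1n, hab])
    exact heq ▸ hadj a
  set g : ℕ → V := fun j => f ⟨j % n, Nat.mod_lt _ (by omega)⟩ with hgdef
  have hg : ∀ j, G.Adj (g (j+1)) (g j) := by
    intro j
    exact (key ⟨j % n, Nat.mod_lt _ (by omega)⟩ ⟨(j+1) % n, Nat.mod_lt _ (by omega)⟩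
      (by simp only [Fin.val]; rw [Nat.add_mod j 1 n, h1n])).symm
  have ginj : ∀ i j, i < n → j < n → g i = g j → i = j := by
    intro i j hi hj hij
    have h2 := hbij.injective hij
    rw [Fin.mk.injEq] at h2
    rwa [Nat.mod_eq_of_lt hi, Nat.mod_eq_of_lt hj] at h2
  have hadj0 : G.Adj (g 0) (g (n-1)) := by
    refine (key ⟨(n-1) % n, Nat.mod_lt _ (by omega)⟩ ⟨0 % n, Nat.mod_lt _ (by omega)⟩ ?_).symm
    show 0 % n = ((n-1) % n + 1) % n
    rw [Nat.zero_mod, Nat.mod_eq_of_lt (show n-1 < n from by omega),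
      show n-1+1 = n from by omega, Nat.mod_self]
  set p : G.Walk (g 0) (g 0) := Walk.cons hadj0 (walkDown g hg (n-1)) with hpdef
  have hsupp : p.support = g 0 :: ((List.range n).reverse).map g := by
    rw [hpdef, Walk.support_cons, walkDown_support, show n - 1 + 1 = n from by omega]
  have hsupptail : p.support.tail = ((List.range n).reverse).map g := by rw [hsupp]; rfl
  have htailnd : (((List.range n).reverse).map g).Nodup := by
    rw [List.nodup_map_iff_inj_on (by simp [List.nodup_range])]
    intro i hi j hj hij
    simp only [List.mem_reverse, List.mem_range] at hi hj
    exact ginj i j hi hj hij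
  have hedges : p.edges = s(g 0, g (n-1)) :: ((List.range (n-1)).reverse).map
      (fun j => s(g (j+1), g j)) := by
    rw [hpdef, Walk.edges_cons, walkDown_edges]
  have hedgesnd : p.edges.Nodup := by
    rw [hedges, List.nodup_cons]
    constructor
    · intro hmem
      simp only [List.mem_map, List.mem_reverse, List.mem_range] at hmem
      obtain ⟨j, hj, hj2⟩ := hmem
      rw [Sym2.eq_iff] at hj2
      rcases hj2 with ⟨h1, h2⟩ | ⟨h1, h2⟩
      · have := ginj (j+1) 0 (by omega) (by omega) h1; omega
      · have e1 := ginj j 0 (by omega) (by omega) h2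
        have e2 := ginj (j+1) (n-1) (by omega) (by omega) h1
        omega
    · rw [List.nodup_map_iff_inj_on (by simp [List.nodup_range])]
      intro i hi j hj hij
      simp only [List.mem_reverse, List.mem_range] at hi hj
      rw [Sym2.eq_iff] at hij
      rcases hij with ⟨h1, h2⟩ | ⟨h1, h2⟩
      · exact ginj _ _ (by omega) (by omega) h2
      · have e1 := ginj _ _ (by omega) (by omega) h1
        have e2 := ginj _ _ (by omega) (by omega) h2
        omega
  have hcyc : p.IsCycle := by
    refine ⟨⟨⟨hedgesnd⟩, ?_⟩, ?_⟩
    · rw [hpdef]; exact fun h => by simp at h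
    · rw [hsupptail]; exact htailnd
  intro _
  refine ⟨g 0, p, hcyc, ?_⟩
  intro v
  rw [Walk.support_tail_of_not_nil p hcyc.not_nil, hsupptail]
  apply List.count_eq_one_of_mem htailnd
  obtain ⟨i, rfl⟩ := hbij.surjective v
  simp only [List.mem_map, List.mem_reverse, List.mem_range]
  refine ⟨i.val, i.isLt, ?_⟩
  show f _ = f i
  congr 1
  exact Fin.ext (Nat.mod_eq_of_lt i.isLt)

open CycAux in
lemma exists_cyc_of_isHamiltonian {V : Type*} [DecidableEq V] [Fintype V] {G : SimpleGraph V}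
    {n : ℕ} [NeZero n] (hn : 3 ≤ n) (hcard : Fintype.card V = n) (hham : G.IsHamiltonian) :
    ∃ f : Fin n → V, Function.Bijective f ∧ ∀ i : Fin n, G.Adj (f i) (f (i+1)) := by
  obtain ⟨b, p, hp⟩ := hham (by omega)
  have hlen : p.length = n := by rw [hp.length_eq, hcard]
  have hnd := hp.isCycle.support_nodup
  have hstl : p.support.tail.length = n := by
    have h1 := p.length_support
    have h2 := List.length_tail (l := p.support)
    omega
  have hgl : p.getVert n = b := by
    have := p.getVert_length
    rwa [hlen] at this
  have hgetVert : ∀ (i : ℕ) (_h0 : 0 < i) (_hi : i ≤ n),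
      p.getVert i = p.support.tail[i-1]'(by rw [hstl]; omega) := by
    intro i h0 hi
    have h1 : p.support.tail[i-1]'(by rw [hstl]; omega) =
        p.support[i]'(by rw [p.length_support]; omega) := by
      rw [List.getElem_tail]
      congr 1
      omega
    rw [h1, support_getElem]
  have htinj : ∀ i j : ℕ, 0 < i → i ≤ n → 0 < j → j ≤ n →
      p.getVert i = p.getVert j → i = j := by
    intro i j h0i hi h0j hj hij
    rw [hgetVert i h0i hi, hgetVert j h0j hj] at hij
    have := (List.Nodup.get_inj_iff hnd (i := ⟨i-1, by rw [hstl]; omega⟩)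
      (j := ⟨j-1, by rw [hstl]; omega⟩))
    simp only [List.get_eq_getElem] at this
    have := this.mp hij
    simp only [Fin.mk.injEq] at this
    omega
  have hinj : ∀ i j : ℕ, i < n → j < n → p.getVert i = p.getVert j → i = j := by
    intro i j hi hj hij
    rcases Nat.eq_zero_or_pos i with h0i | h0i <;> rcases Nat.eq_zero_or_pos j with h0j | h0j
    · omega
    · subst h0i
      have hij' : p.getVert n = p.getVert j :=
        (hgl.trans p.getVert_zero.symm).trans hij
      have := htinj n j (by omega) le_rfl h0j (by omega) hij'
      omega
    · subst h0j
      have hij' : p.getVert i = p.getVert n :=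
        hij.trans (p.getVert_zero.trans hgl.symm)
      have := htinj i n h0i (by omega) (by omega) le_rfl hij'
      omega
    · exact htinj i j h0i (by omega) h0j (by omega) hij
  have hfinj : Function.Injective (fun i : Fin n => p.getVert i.val) := by
    intro i j hij
    exact Fin.ext (hinj i.val j.val i.isLt j.isLt hij)
  have hfbij : Function.Bijective (fun i : Fin n => p.getVert i.val) := by
    rw [Fintype.bijective_iff_injective_and_card]
    exact ⟨hfinj, by simp [hcard]⟩
  refine ⟨fun i : Fin n => p.getVert i.val, hfbij, ?_⟩
  intro i
  have h1n : (1:ℕ) % n = 1 := Nat.mod_eq_of_lt (by omega)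
  show G.Adj (p.getVert i.val) (p.getVert (i+1).val)
  have hval : (i+1).val = (i.val + 1) % n := by rw [Fin.val_add, Fin.val_one', h1n]
  rcases eq_or_ne i.val (n-1) with hl | hl
  · have h1 : (i + 1).val = 0 := by rw [hval, hl, show n - 1 + 1 = n from by omega, Nat.mod_self]
    have h := p.adj_getVert_succ (i := n-1) (by omega)
    rw [show n - 1 + 1 = n from by omega, hgl] at h
    rw [h1, hl]
    rwa [show p.getVert 0 = b from p.getVert_zero]
  · have h1 : (i + 1).val = i.val + 1 := by
      have := i.isLt
      rw [hval, Nat.mod_eq_of_lt (by omega)]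
    rw [h1]
    exact p.adj_getVert_succ (by omega)

end CycSection

section MapMismatch
variable {V W : Type*} (G : SimpleGraph V) (H : SimpleGraph W) (π : V ≃ W)

lemma map_adj_equiv (x y : W) :
    (G.map π.toEmbedding).Adj x y ↔ G.Adj (π.symm x) (π.symm y) := by
  rw [SimpleGraph.map_adj]
  constructor
  · rintro ⟨u, v, h, rfl, rfl⟩
    simpa using h
  · intro h
    exact ⟨π.symm x, π.symm y, h, by simp, by simp⟩

lemma map_neighborSet (x : W) :
    (G.map π.toEmbedding).neighborSet x = π '' (G.neighborSet (π.symm x)) := by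
  ext y
  simp only [SimpleGraph.mem_neighborSet, map_adj_equiv, Set.mem_image]
  constructor
  · intro h
    exact ⟨π.symm y, h, by simp⟩
  · rintro ⟨v, hv, rfl⟩
    simpa using hv

lemma mismatch_neighborSet (x : W) :
    (mismatchGraph G H π).neighborSet x =
      symmDiff ((G.map π.toEmbedding).neighborSet x) (H.neighborSet x) := by
  ext y
  simp only [SimpleGraph.mem_neighborSet, mismatchGraph, symmDiff_def, Set.mem_union,
    Set.mem_diff, SimpleGraph.sup_adj, SimpleGraph.sdiff_adj]
  rfl

lemma mismatchDeg_le_MMC [Fintype W] (x : W) : mismatchDeg G H π x ≤ MMC G H π :=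
  Finset.le_sup (Finset.mem_univ x)

end MapMismatch

section Count
variable {W : Type*} [Finite W] {S T : Set W}

lemma symmDiff_ncard_eq :
    (symmDiff S T).ncard = (S \ T).ncard + (T \ S).ncard := by
  rw [symmDiff_def]
  refine Set.ncard_union_eq ?_
  rw [Set.disjoint_left]
  rintro a ⟨h1, h2⟩ ⟨h3, h4⟩
  exact h2 h3

lemma ncard_sdiff_eq' : (S \ T).ncard = S.ncard - (S ∩ T).ncard := by
  rw [show S \ T = S \ (S ∩ T) by rw [Set.diff_self_inter]]
  exact Set.ncard_diff Set.inter_subset_left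

lemma symmDiff_le_of_inter (hS : S.ncard ≤ 3) (hT : T.ncard ≤ 3) (hi : 2 ≤ (S ∩ T).ncard) :
    (symmDiff S T).ncard ≤ 2 := by
  rw [symmDiff_ncard_eq, ncard_sdiff_eq', show T \ S = T \ (T ∩ S) by rw [Set.diff_self_inter],
    Set.ncard_diff Set.inter_subset_left, Set.inter_comm T S]
  omega

lemma inter_ge_of_symmDiff (hS : S.ncard = 3) (hT : T.ncard = 3)
    (hd : (symmDiff S T).ncard ≤ 2) : 2 ≤ (S ∩ T).ncard := by
  rw [symmDiff_ncard_eq, ncard_sdiff_eq', show T \ S = T \ (T ∩ S) by rw [Set.diff_self_inter],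
    Set.ncard_diff Set.inter_subset_left, Set.inter_comm T S] at hd
  have h1 : (S ∩ T).ncard ≤ 3 := hS ▸ Set.ncard_le_ncard Set.inter_subset_left
  omega

lemma ncard_le_add_symmDiff : S.ncard ≤ T.ncard + (symmDiff S T).ncard := by
  have hsub : S ⊆ T ∪ symmDiff S T := by
    intro a ha
    by_cases h : a ∈ T
    · exact Or.inl h
    · exact Or.inr (Set.mem_symmDiff.mpr (Or.inl ⟨ha, h⟩))
  calc S.ncard ≤ (T ∪ symmDiff S T).ncard := Set.ncard_le_ncard hsub
    _ ≤ _ := Set.ncard_union_le _ _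

lemma symmDiff_union_cancel {X Y C : Set W} (hX : Disjoint X C) (hY : Disjoint Y C) :
    symmDiff (X ∪ C) (Y ∪ C) = symmDiff X Y := by
  ext a
  have h1 : a ∈ X → a ∉ C := fun h => Set.disjoint_left.mp hX h
  have h2 : a ∈ Y → a ∉ C := fun h => Set.disjoint_left.mp hY h
  simp only [Set.mem_symmDiff, Set.mem_union]
  tauto

end Count

section HkStruct

/-- chord partner of `x` in `Hk k` -/
def chd (k x : ℕ) : ℕ :=
  if k % 2 = 0 then (if x % 4 = 0 ∨ x % 4 = 1 then x + 2 else x - 2)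
  else if x = 1 then 2*k-2 else if x = 2*k-2 then 1
  else if x % 4 = 2 ∨ x % 4 = 1 then x - 2 else x + 2

lemma chd_lt {k x : ℕ} (hk : 3 ≤ k) (hx : x < 2*k) : chd k x < 2*k := by
  unfold chd; split_ifs <;> omega

lemma chd_parity {k x : ℕ} (hk : 3 ≤ k) (hx : x < 2*k) :
    chd k x % 2 = x % 2 ∨ (k % 2 = 1 ∧ ((x = 1 ∧ chd k x = 2*k-2) ∨ (x = 2*k-2 ∧ chd k x = 1))) := by
  unfold chd; split_ifs <;> omega

set_option maxHeartbeats 2000000 in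
lemma Hk_adj_val {k : ℕ} (hk : 3 ≤ k) (x y : Fin (2*k)) :
    (Hk k).Adj x y ↔ (y.val = x.val + 1 ∨ x.val = y.val + 1 ∨
      (x.val = 2*k-1 ∧ y.val = 0) ∨ (y.val = 2*k-1 ∧ x.val = 0) ∨ y.val = chd k x.val) := by
  have hx := x.isLt
  have hy := y.isLt
  have hne : x ≠ y ↔ x.val ≠ y.val := by simp [Fin.ext_iff]
  rw [Hk, SimpleGraph.fromRel_adj, hne]
  unfold chd
  by_cases h2 : k % 2 = 0 <;> simp only [h2, if_true, if_false, reduceIte] <;>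
    split_ifs <;> omega

variable {k : ℕ}

lemma val_add_one' [NeZero (2*k)] (hk : 3 ≤ k) (x : Fin (2*k)) :
    (x + 1).val = if x.val = 2*k-1 then 0 else x.val + 1 := by
  have hx := x.isLt
  have h1 : (1:ℕ) % (2*k) = 1 := Nat.mod_eq_of_lt (by omega)
  rw [Fin.val_add, Fin.val_one', h1]
  rcases eq_or_ne x.val (2*k-1) with h | h
  · rw [if_pos h, h]
    have : 2*k-1+1 = 2*k := by omega
    simp [this]
  · rw [if_neg h, Nat.mod_eq_of_lt (by omega)]

lemma val_sub_one' [NeZero (2*k)] (hk : 3 ≤ k) (x : Fin (2*k)) :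
    (x - 1).val = if x.val = 0 then 2*k-1 else x.val - 1 := by
  have hx := x.isLt
  have h1 : (1:ℕ) % (2*k) = 1 := Nat.mod_eq_of_lt (by omega)
  rw [Fin.sub_def]
  simp only [Fin.val_one', h1]
  rcases eq_or_ne x.val 0 with h | h
  · rw [if_pos h, h]
    have : 2*k-1+0 = 2*k-1 := by omega
    rw [this, Nat.mod_eq_of_lt (by omega)]
  · rw [if_neg h]
    have h2 : 2*k - 1 + x.val = (x.val - 1) + 1*(2*k) := by omega
    rw [h2, Nat.add_mul_mod_self_right, Nat.mod_eq_of_lt (by omega)]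

lemma Hk_neighborSet [NeZero (2*k)] (hk : 3 ≤ k) (x : Fin (2*k)) :
    (Hk k).neighborSet x = {x - 1, x + 1, ⟨chd k x.val, chd_lt hk x.isLt⟩} := by
  have hx := x.isLt
  ext y
  have hy := y.isLt
  simp only [SimpleGraph.mem_neighborSet, Hk_adj_val hk, Set.mem_insert_iff,
    Set.mem_singleton_iff, Fin.ext_iff, val_sub_one' hk, val_add_one' hk]
  split_ifs <;> omega

lemma prev_ne_next [NeZero (2*k)] (hk : 3 ≤ k) (x : Fin (2*k)) : x - 1 ≠ x + 1 := by
  have hx := x.isLt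
  simp only [ne_eq, Fin.ext_iff, val_sub_one' hk, val_add_one' hk]
  split_ifs <;> omega

lemma Hk_nbhd_ncard [NeZero (2*k)] (hk : 3 ≤ k) (x : Fin (2*k)) :
    ((Hk k).neighborSet x).ncard = 3 := by
  have hx := x.isLt
  have hpar := chd_parity hk hx
  have hlt := chd_lt hk hx
  rw [Hk_neighborSet hk x]
  have hd2 : x - 1 ≠ ⟨chd k x.val, hlt⟩ := by
    simp only [ne_eq, Fin.ext_iff, val_sub_one' hk]
    split_ifs <;> omega
  have hd3 : x + 1 ≠ ⟨chd k x.val, hlt⟩ := by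
    simp only [ne_eq, Fin.ext_iff, val_add_one' hk]
    split_ifs <;> omega
  rw [Set.ncard_insert_of_notMem (by simp [prev_ne_next hk x, hd2]),
    Set.ncard_insert_of_notMem (by simp [hd3]), Set.ncard_singleton]

lemma Hk_adj_next [NeZero (2*k)] (hk : 3 ≤ k) (x : Fin (2*k)) : (Hk k).Adj x (x + 1) := by
  have hx := x.isLt
  rw [Hk_adj_val hk]
  rw [val_add_one' hk]
  split_ifs <;> omega

lemma Hk_adj_prev [NeZero (2*k)] (hk : 3 ≤ k) (x : Fin (2*k)) : (Hk k).Adj x (x - 1) := by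
  have h := (Hk_adj_next hk (x - 1)).symm
  rwa [sub_add_cancel] at h

end HkStruct

section HatStruct
variable {V : Type*} (G : SimpleGraph V) (P : V → Prop) [DecidablePred P]

lemma hat_adj_inl_inl (u v : V) :
    (hatGraph G P).Adj (Sum.inl u) (Sum.inl v) ↔ G.Adj u v := by
  rw [hatGraph, SimpleGraph.fromRel_adj]
  constructor
  · rintro ⟨hne, h | h⟩
    · exact h
    · exact h.symm
  · intro h
    exact ⟨by simp [h.ne], Or.inl h⟩

lemma hat_adj_inl_inr (u : V) (x : Σ v : V, Fin (if P v then 5 else 12)) :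
    (hatGraph G P).Adj (Sum.inl u) (Sum.inr x) ↔ u = x.1 := by
  rw [hatGraph, SimpleGraph.fromRel_adj]
  constructor
  · rintro ⟨hne, h | h⟩
    · exact h
    · exact h.elim
  · intro h
    exact ⟨by simp, Or.inl h⟩

lemma hat_adj_inr_inr (x y : Σ v : V, Fin (if P v then 5 else 12)) :
    ¬ (hatGraph G P).Adj (Sum.inr x) (Sum.inr y) := by
  rw [hatGraph, SimpleGraph.fromRel_adj]
  rintro ⟨hne, h | h⟩ <;> exact h

lemma hat_neighborSet_inl (v : V) :
    (hatGraph G P).neighborSet (Sum.inl v) =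
      Sum.inl '' (G.neighborSet v) ∪
        Sum.inr '' {x : Σ v : V, Fin (if P v then 5 else 12) | x.1 = v} := by
  ext y
  cases y with
  | inl u =>
    simp only [SimpleGraph.mem_neighborSet, hat_adj_inl_inl, Set.mem_union, Set.mem_image]
    constructor
    · intro h; exact Or.inl ⟨u, h, rfl⟩
    · rintro (⟨w, hw, hww⟩ | ⟨x, _, hx⟩)
      · cases hww; exact hw
      · exact absurd hx (by simp)
  | inr x =>
    simp only [SimpleGraph.mem_neighborSet, hat_adj_inl_inr, Set.mem_union, Set.mem_image]
    constructor
    · intro h; exact Or.inr ⟨x, h.symm, rfl⟩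
    · rintro (⟨w, _, hww⟩ | ⟨z, hz, hzz⟩)
      · exact absurd hww (by simp)
      · cases hzz; exact hz.symm

lemma hat_neighborSet_inr (x : Σ v : V, Fin (if P v then 5 else 12)) :
    (hatGraph G P).neighborSet (Sum.inr x) = {Sum.inl x.1} := by
  ext y
  cases y with
  | inl u =>
    simp only [SimpleGraph.mem_neighborSet, Set.mem_singleton_iff]
    rw [SimpleGraph.adj_comm, hat_adj_inl_inr]
    simp [eq_comm]
  | inr z =>
    simp only [SimpleGraph.mem_neighborSet, Set.mem_singleton_iff]
    constructor
    · intro h; exact absurd h (hat_adj_inr_inr G P x z)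
    · intro h; simp at h

lemma fiber_eq_image (v : V) :
    {x : Σ v : V, Fin (if P v then 5 else 12) | x.1 = v} =
      Sigma.mk v '' (Set.univ : Set (Fin (if P v then 5 else 12))) := by
  ext ⟨a, b⟩
  simp only [Set.mem_setOf_eq, Set.image_univ, Set.mem_range]
  constructor
  · rintro rfl; exact ⟨b, rfl⟩
  · rintro ⟨i, h⟩; cases h; rfl

lemma fiber_ncard (v : V) :
    ({x : Σ v : V, Fin (if P v then 5 else 12) | x.1 = v}).ncard = if P v then 5 else 12 := by
  rw [fiber_eq_image, Set.ncard_image_of_injective _ sigma_mk_injective, Set.ncard_univ]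
  simp [Nat.card_eq_fintype_card]

lemma hat_nbhd_inl_ncard [Finite V] (v : V) :
    ((hatGraph G P).neighborSet (Sum.inl v)).ncard =
      (G.neighborSet v).ncard + (if P v then 5 else 12) := by
  rw [hat_neighborSet_inl, Set.ncard_union_eq (by
      rw [Set.disjoint_left]; rintro a ⟨u, _, rfl⟩ ⟨x, _, hx⟩; exact absurd hx (by simp)),
    Set.ncard_image_of_injective _ Sum.inl_injective,
    Set.ncard_image_of_injective _ Sum.inr_injective, fiber_ncard]

lemma hat_nbhd_inr_ncard (x : Σ v : V, Fin (if P v then 5 else 12)) :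
    ((hatGraph G P).neighborSet (Sum.inr x)).ncard = 1 := by
  rw [hat_neighborSet_inr, Set.ncard_singleton]

end HatStruct

section Core
variable {V : Type*} [Fintype V] [DecidableEq V] {k : ℕ}
  {G : SimpleGraph V} [DecidableRel G.Adj] {A B : Finset V}

lemma nbhd_ncard_of_reg (hreg : G.IsRegularOfDegree 3) (v : V) :
    (G.neighborSet v).ncard = 3 := by
  rw [Set.ncard_eq_toFinset_card', Set.toFinset_card, SimpleGraph.card_neighborSet_eq_degree]
  exact hreg v

lemma mapS_ncard (hreg : G.IsRegularOfDegree 3) (σ : V ≃ Fin (2*k)) (x : Fin (2*k)) :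
    ((G.map σ.toEmbedding).neighborSet x).ncard = 3 := by
  rw [map_neighborSet, Set.ncard_image_of_injective _ σ.injective, nbhd_ncard_of_reg hreg]

lemma adj_partition (hUnion : ∀ v, v ∈ A ∨ v ∈ B)
    (hAind : ∀ u ∈ A, ∀ v ∈ A, ¬ G.Adj u v) (hBind : ∀ u ∈ B, ∀ v ∈ B, ¬ G.Adj u v)
    {u v : V} (h : G.Adj u v) : (u ∈ A ∧ v ∉ A) ∨ (u ∉ A ∧ v ∈ A) := by
  rcases hUnion u with hu | hu <;> rcases hUnion v with hv | hv
  · exact absurd h (hAind u hu v hv)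
  · refine Or.inl ⟨hu, fun hv' => absurd h (hAind u hu v hv')⟩
  · refine Or.inr ⟨fun hu' => absurd h (hAind u hu' v hv), hv⟩
  · exact absurd h (hBind u hu v hv)

lemma mapS_parity (hUnion : ∀ v, v ∈ A ∨ v ∈ B)
    (hAind : ∀ u ∈ A, ∀ v ∈ A, ¬ G.Adj u v) (hBind : ∀ u ∈ B, ∀ v ∈ B, ¬ G.Adj u v)
    (σ : V ≃ Fin (2*k)) (hres : InRes k A σ) {x y : Fin (2*k)}
    (hy : y ∈ (G.map σ.toEmbedding).neighborSet x) : y.val % 2 ≠ x.val % 2 := by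
  rw [SimpleGraph.mem_neighborSet, map_adj_equiv] at hy
  have h1 := hres (σ.symm x)
  have h2 := hres (σ.symm y)
  rw [Equiv.apply_symm_apply] at h1 h2
  rcases adj_partition hUnion hAind hBind hy with ⟨hu, hv⟩ | ⟨hu, hv⟩
  · rw [h1] at hu; rw [h2] at hv; omega
  · rw [h1] at hu; rw [h2] at hv; omega

lemma mmc_le_two [NeZero (2*k)] (hk3 : 3 ≤ k) (hreg : G.IsRegularOfDegree 3) (σ : V ≃ Fin (2*k))
    (hcyc : ∀ i : Fin (2*k), G.Adj (σ.symm i) (σ.symm (i+1))) :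
    MMC G (Hk k) σ ≤ 2 := by
  apply Finset.sup_le
  intro x _
  rw [mismatchDeg, mismatch_neighborSet]
  apply symmDiff_le_of_inter (le_of_eq (mapS_ncard hreg σ x)) (le_of_eq (Hk_nbhd_ncard hk3 x))
  have hprev : x - 1 ∈ (G.map σ.toEmbedding).neighborSet x := by
    rw [SimpleGraph.mem_neighborSet, map_adj_equiv]
    have h := hcyc (x - 1)
    rw [sub_add_cancel] at h
    exact h.symm
  have hnext : x + 1 ∈ (G.map σ.toEmbedding).neighborSet x := by
    rw [SimpleGraph.mem_neighborSet, map_adj_equiv]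
    exact hcyc x
  have hsub : ({x - 1, x + 1} : Set (Fin (2*k))) ⊆
      (G.map σ.toEmbedding).neighborSet x ∩ (Hk k).neighborSet x := by
    rintro y (rfl | rfl)
    · exact ⟨hprev, Hk_adj_prev hk3 x⟩
    · exact ⟨hnext, Hk_adj_next hk3 x⟩
  calc (2:ℕ) = ({x - 1, x + 1} : Set (Fin (2*k))).ncard :=
        (Set.ncard_pair (prev_ne_next hk3 x)).symm
    _ ≤ _ := Set.ncard_le_ncard hsub (Set.toFinite _)

lemma cyc_of_mmc [NeZero (2*k)] (hk3 : 3 ≤ k) (hUnion : ∀ v, v ∈ A ∨ v ∈ B)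
    (hAind : ∀ u ∈ A, ∀ v ∈ A, ¬ G.Adj u v) (hBind : ∀ u ∈ B, ∀ v ∈ B, ¬ G.Adj u v)
    (hreg : G.IsRegularOfDegree 3)
    (σ : V ≃ Fin (2*k)) (hres : InRes k A σ) (hmmc : MMC G (Hk k) σ ≤ 2) :
    ∀ i : Fin (2*k), G.Adj (σ.symm i) (σ.symm (i + 1)) := by
  have claim : ∀ x : Fin (2*k), ¬ (k % 2 = 1 ∧ (x.val = 1 ∨ x.val = 2*k-2)) →
      x - 1 ∈ (G.map σ.toEmbedding).neighborSet x ∧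
      x + 1 ∈ (G.map σ.toEmbedding).neighborSet x := by
    intro x hxs
    set S := (G.map σ.toEmbedding).neighborSet x with hSdef
    set T := (Hk k).neighborSet x with hTdef
    have hinter : 2 ≤ (S ∩ T).ncard := by
      apply inter_ge_of_symmDiff (mapS_ncard hreg σ x) (Hk_nbhd_ncard hk3 x)
      rw [← mismatch_neighborSet]
      exact le_trans (mismatchDeg_le_MMC G (Hk k) σ x) hmmc
    have hsub : S ∩ T ⊆ ({x - 1, x + 1} : Set (Fin (2*k))) := by
      rintro y ⟨hyS, hyT⟩
      rw [hTdef, Hk_neighborSet hk3, Set.mem_insert_iff, Set.mem_insert_iff,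
        Set.mem_singleton_iff] at hyT
      rcases hyT with h | h | h
      · exact Or.inl h
      · exact Or.inr h
      · exfalso
        have hpar := mapS_parity hUnion hAind hBind σ hres hyS
        have hc := chd_parity hk3 x.isLt
        rw [h] at hpar
        have hpar' : chd k x.val % 2 ≠ x.val % 2 := hpar
        rcases hc with hc | ⟨hodd, hc⟩
        · exact hpar' hc
        · refine hxs ⟨hodd, ?_⟩
          rcases hc with ⟨h1, _⟩ | ⟨h1, _⟩
          · exact Or.inl h1
          · exact Or.inr h1
    have heq : S ∩ T = ({x - 1, x + 1} : Set (Fin (2*k))) := by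
      apply Set.eq_of_subset_of_ncard_le hsub
      rw [Set.ncard_pair (prev_ne_next hk3 x)]
      exact hinter
    constructor
    · have : x - 1 ∈ S ∩ T := heq ▸ (Set.mem_insert _ _)
      exact this.1
    · have : x + 1 ∈ S ∩ T := heq ▸ (Set.mem_insert_of_mem _ rfl)
      exact this.1
  intro i
  have hmap : (G.map σ.toEmbedding).Adj i (i + 1) := by
    by_cases hsp : k % 2 = 1 ∧ (i.val = 1 ∨ i.val = 2*k-2)
    · have hns : ¬ (k % 2 = 1 ∧ ((i+1).val = 1 ∨ (i+1).val = 2*k-2)) := by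
        rw [val_add_one' hk3]
        have := i.isLt
        split_ifs <;> omega
      have h := (claim (i + 1) hns).1
      rw [add_sub_cancel_right] at h
      exact (SimpleGraph.mem_neighborSet _ _ _ |>.mp h).symm
    · exact (claim i hsp).2
  rw [map_adj_equiv] at hmap
  exact hmap

lemma exists_res_cyc [NeZero (2*k)] (hk3 : 3 ≤ k) (hcard : Fintype.card V = 2*k)
    (hUnion : ∀ v, v ∈ A ∨ v ∈ B)
    (hAind : ∀ u ∈ A, ∀ v ∈ A, ¬ G.Adj u v) (hBind : ∀ u ∈ B, ∀ v ∈ B, ¬ G.Adj u v)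
    (hham : G.IsHamiltonian) :
    ∃ σ : V ≃ Fin (2*k), InRes k A σ ∧ ∀ i : Fin (2*k), G.Adj (σ.symm i) (σ.symm (i+1)) := by
  obtain ⟨f, hbij, hadj⟩ := exists_cyc_of_isHamiltonian (n := 2*k) (by omega) hcard hham
  have hflip : ∀ i : Fin (2*k), (f i ∈ A ↔ f (i+1) ∉ A) := by
    intro i
    rcases adj_partition hUnion hAind hBind (hadj i) with ⟨h1, h2⟩ | ⟨h1, h2⟩ <;> tauto
  have halt : ∀ m (hm : m < 2*k),
      (f ⟨m, hm⟩ ∈ A ↔ (f ⟨0, by omega⟩ ∈ A ↔ m % 2 = 0)) := by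
    intro m
    induction m with
    | zero =>
      intro hm
      simp
    | succ m ih =>
      intro hm
      have h1 : (⟨m+1, hm⟩ : Fin (2*k)) = ⟨m, by omega⟩ + 1 := by
        apply Fin.ext
        rw [val_add_one' hk3]
        simp only [Fin.val]
        split_ifs <;> omega
      rw [h1]
      have h2 := hflip ⟨m, by omega⟩
      have h3 := ih (by omega)
      have hmod : ((m+1) % 2 = 0) ↔ ¬ (m % 2 = 0) := by omega
      rw [hmod]
      tauto
  have haltF : ∀ i : Fin (2*k), (f i ∈ A ↔ (f ⟨0, by omega⟩ ∈ A ↔ i.val % 2 = 0)) := by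
    intro i
    have := halt i.val i.isLt
    rwa [Fin.eta] at this
  obtain ⟨g, hgbij, hgadj, hgalt⟩ : ∃ g : Fin (2*k) → V, Function.Bijective g ∧
      (∀ i, G.Adj (g i) (g (i+1))) ∧ ∀ i : Fin (2*k), (g i ∈ A ↔ i.val % 2 = 0) := by
    by_cases h0 : f ⟨0, by omega⟩ ∈ A
    · refine ⟨f, hbij, hadj, ?_⟩
      intro i
      rw [haltF i]
      tauto
    · refine ⟨fun i => f (i + 1), ?_, ?_, ?_⟩
      · exact hbij.comp (Equiv.addRight (1 : Fin (2*k))).bijective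
      · intro i
        exact hadj (i + 1)
      · intro i
        have hv := val_add_one' hk3 i
        have hi := i.isLt
        have key : ((i+1).val % 2 = 0) ↔ ¬ (i.val % 2 = 0) := by
          split_ifs at hv <;> omega
        rw [haltF (i + 1), key]
        tauto
  refine ⟨(Equiv.ofBijective g hgbij).symm, ?_, ?_⟩
  · intro v
    have hv := hgalt ((Equiv.ofBijective g hgbij).symm v)
    rw [show g ((Equiv.ofBijective g hgbij).symm v) = v from
      Equiv.ofBijective_apply_symm_apply g hgbij v] at hv
    exact hv
  · intro i
    exact hgadj i

end Core


section HatCore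
variable {V : Type*} [Fintype V] [DecidableEq V] {k : ℕ}
  {G : SimpleGraph V} [DecidableRel G.Adj] {A B : Finset V}

lemma disj_inl_inr {α β : Type*} (X : Set α) (Y : Set β) :
    Disjoint (Sum.inl '' X : Set (α ⊕ β)) (Sum.inr '' Y) := by
  rw [Set.disjoint_left]
  rintro a ⟨u, _, rfl⟩ ⟨x, _, hx⟩
  exact absurd hx (by simp)

lemma hat_forward [NeZero (2*k)] (hk3 : 3 ≤ k) (hreg : G.IsRegularOfDegree 3)
    (σ : V ≃ Fin (2*k)) (hres : InRes k A σ) (hmmc : MMC G (Hk k) σ ≤ 2) :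
    ∃ π : (V ⊕ Σ v : V, Fin (if v ∈ A then 5 else 12)) ≃
        (Fin (2 * k) ⊕ Σ w : Fin (2 * k), Fin (if w.val % 2 = 0 then 5 else 12)),
      MMC (hatGraph G (· ∈ A)) (hatGraph (Hk k) (fun w => w.val % 2 = 0)) π ≤ 2 := by
  have hcond : ∀ v : V, (if v ∈ A then 5 else 12) = (if (σ v).val % 2 = 0 then 5 else 12) := by
    intro v
    by_cases hv : v ∈ A
    · rw [if_pos hv, if_pos ((hres v).mp hv)]
    · rw [if_neg hv, if_neg (fun h => hv ((hres v).mpr h))]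
  set F : ∀ v : V, Fin (if v ∈ A then 5 else 12) ≃ Fin (if (σ v).val % 2 = 0 then 5 else 12) :=
    fun v => finCongr (hcond v) with hFdef
  set τ := Equiv.sigmaCongr (β₁ := fun v : V => Fin (if v ∈ A then 5 else 12))
    (β₂ := fun w : Fin (2*k) => Fin (if w.val % 2 = 0 then 5 else 12)) σ F with hτdef
  set π := Equiv.sumCongr σ τ with hπdef
  refine ⟨π, ?_⟩
  have hπinlap : ∀ v : V, π (Sum.inl v) = Sum.inl (σ v) := fun v => rfl
  have hπsymm_inl : ∀ w : Fin (2*k), π.symm (Sum.inl w) = Sum.inl (σ.symm w) := by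
    intro w
    rw [Equiv.symm_apply_eq, hπinlap, Equiv.apply_symm_apply]
  have hπinl_img : ∀ N : Set V, π '' (Sum.inl '' N) = Sum.inl '' (σ '' N) := by
    intro N
    rw [← Set.image_comp, ← Set.image_comp]
    rfl
  have hπfiber : ∀ v : V,
      π '' (Sum.inr '' {x : Σ v : V, Fin (if v ∈ A then 5 else 12) | x.1 = v}) =
      Sum.inr '' {y : Σ w : Fin (2*k), Fin (if w.val % 2 = 0 then 5 else 12) | y.1 = σ v} := by
    intro v
    ext z
    simp only [Set.mem_image]
    constructor
    · rintro ⟨_, ⟨⟨a, b⟩, hab, rfl⟩, rfl⟩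
      simp only [Set.mem_setOf_eq] at hab
      subst hab
      exact ⟨⟨σ a, F a b⟩, rfl, rfl⟩
    · rintro ⟨⟨c, j⟩, hc, rfl⟩
      simp only [Set.mem_setOf_eq] at hc
      subst hc
      refine ⟨Sum.inr ⟨v, (F v).symm j⟩, ⟨⟨v, (F v).symm j⟩, rfl, rfl⟩, ?_⟩
      show Sum.inr (⟨σ v, F v ((F v).symm j)⟩ :
        Σ w : Fin (2*k), Fin (if w.val % 2 = 0 then 5 else 12)) = Sum.inr ⟨σ v, j⟩
      rw [Equiv.apply_symm_apply]
  apply Finset.sup_le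
  rintro (w | y) _
  · rw [mismatchDeg, mismatch_neighborSet, map_neighborSet, hπsymm_inl,
      hat_neighborSet_inl, Set.image_union, hπinl_img, hπfiber, Equiv.apply_symm_apply,
      hat_neighborSet_inl, symmDiff_union_cancel (disj_inl_inr _ _) (disj_inl_inr _ _),
      ← map_neighborSet G σ w, ← Set.image_symmDiff Sum.inl_injective,
      Set.ncard_image_of_injective _ Sum.inl_injective, ← mismatch_neighborSet]
    exact le_trans (mismatchDeg_le_MMC G (Hk k) σ w) hmmc
  · have hπsymm_inr : π.symm (Sum.inr y) = Sum.inr (τ.symm y) := by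
      rw [Equiv.symm_apply_eq]
      show Sum.inr y = Sum.inr (τ (τ.symm y))
      rw [Equiv.apply_symm_apply]
    have hfst : σ ((τ.symm y).1) = y.1 := by
      have : (τ (τ.symm y)).1 = y.1 := by rw [Equiv.apply_symm_apply]
      exact this
    rw [mismatchDeg, mismatch_neighborSet, map_neighborSet, hπsymm_inr,
      hat_neighborSet_inr, Set.image_singleton]
    have himg : π (Sum.inl (τ.symm y).1) = Sum.inl y.1 := by
      rw [hπinlap, hfst]
    rw [himg, hat_neighborSet_inr, symmDiff_self]
    simp

lemma hat_backward (hk3 : 3 ≤ k) (hcard : Fintype.card V = 2 * k)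
    (hreg : G.IsRegularOfDegree 3)
    (π : (V ⊕ Σ v : V, Fin (if v ∈ A then 5 else 12)) ≃
        (Fin (2 * k) ⊕ Σ w : Fin (2 * k), Fin (if w.val % 2 = 0 then 5 else 12)))
    (hmmc : MMC (hatGraph G (· ∈ A)) (hatGraph (Hk k) (fun w => w.val % 2 = 0)) π ≤ 2) :
    ∃ σ : V ≃ Fin (2 * k), InRes k A σ ∧ MMC G (Hk k) σ ≤ 2 := by
  haveI : NeZero (2*k) := ⟨by omega⟩
  set Gh := hatGraph G (· ∈ A) with hGh
  set Hh := hatGraph (Hk k) (fun w : Fin (2*k) => w.val % 2 = 0) with hHh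
  have hdel : ∀ x, (symmDiff ((Gh.map π.toEmbedding).neighborSet x) (Hh.neighborSet x)).ncard ≤ 2 := by
    intro x
    rw [← mismatch_neighborSet]
    exact le_trans (mismatchDeg_le_MMC Gh Hh π x) hmmc
  have hkey : ∀ v : V, ∃ w : Fin (2*k), π (Sum.inl v) = Sum.inl w ∧ (v ∈ A ↔ w.val % 2 = 0) := by
    intro v
    have hs : ((Gh.map π.toEmbedding).neighborSet (π (Sum.inl v))).ncard =
        3 + (if v ∈ A then 5 else 12) := by
      rw [map_neighborSet, Equiv.symm_apply_apply,
        Set.ncard_image_of_injective _ π.injective, hGh, hat_nbhd_inl_ncard,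
        nbhd_ncard_of_reg hreg]
    have hb1 := ncard_le_add_symmDiff (S := (Gh.map π.toEmbedding).neighborSet (π (Sum.inl v)))
      (T := Hh.neighborSet (π (Sum.inl v)))
    have hb2 := ncard_le_add_symmDiff (S := Hh.neighborSet (π (Sum.inl v)))
      (T := (Gh.map π.toEmbedding).neighborSet (π (Sum.inl v)))
    rw [symmDiff_comm] at hb2
    have hd := hdel (π (Sum.inl v))
    rcases hx : π (Sum.inl v) with w | y
    · refine ⟨w, rfl, ?_⟩
      rw [hx] at hs hb1 hb2 hd
      have ht : (Hh.neighborSet (Sum.inl w)).ncard = 3 + (if w.val % 2 = 0 then 5 else 12) := by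
        rw [hHh, hat_nbhd_inl_ncard, Hk_nbhd_ncard hk3]
      rw [hs, ht] at hb1 hb2
      by_cases hv : v ∈ A <;> by_cases hw : w.val % 2 = 0
      · exact iff_of_true hv hw
      · exfalso
        rw [if_pos hv, if_neg hw] at hb1 hb2
        omega
      · exfalso
        rw [if_neg hv, if_pos hw] at hb1 hb2
        omega
      · exact iff_of_false hv hw
    · exfalso
      rw [hx] at hs hb1 hd
      have ht1 : (Hh.neighborSet (Sum.inr y)).ncard = 1 := by
        rw [hHh]
        exact hat_nbhd_inr_ncard _ _ y
      rw [hs, ht1] at hb1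
      split_ifs at hb1 <;> omega
  set t : V → Fin (2*k) :=
    fun v => Sum.elim id (fun _ => (⟨0, by omega⟩ : Fin (2*k))) (π (Sum.inl v)) with htdef
  have hτ : ∀ v : V, π (Sum.inl v) = Sum.inl (t v) := by
    intro v
    obtain ⟨w, hw, _⟩ := hkey v
    rw [htdef]
    simp only [hw]
    rfl
  have htinj : Function.Injective t := by
    intro u v huv
    have : π (Sum.inl u) = π (Sum.inl v) := by rw [hτ u, hτ v, huv]
    exact Sum.inl_injective (π.injective this)
  have htbij : Function.Bijective t := by
    rw [Fintype.bijective_iff_injective_and_card]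
    exact ⟨htinj, by simp [hcard]⟩
  set σ : V ≃ Fin (2*k) := Equiv.ofBijective t htbij with hσdef
  have hσap : ∀ v, σ v = t v := fun v => rfl
  have hres : InRes k A σ := by
    intro v
    obtain ⟨w, hw, hiff⟩ := hkey v
    have : t v = w := by
      have := (hτ v).symm.trans hw
      exact Sum.inl_injective this
    rw [hσap, this]
    exact hiff
  refine ⟨σ, hres, ?_⟩
  have hπsymm_inl : ∀ w : Fin (2*k), π.symm (Sum.inl w) = Sum.inl (σ.symm w) := by
    intro w
    rw [Equiv.symm_apply_eq, hτ, ← hσap, Equiv.apply_symm_apply]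
  apply Finset.sup_le
  intro w _
  rw [mismatchDeg, mismatch_neighborSet]
  have fS : ∀ y : Fin (2*k), y ∈ (G.map σ.toEmbedding).neighborSet w ↔
      (Sum.inl y : Fin (2*k) ⊕ Σ w : Fin (2*k), Fin (if w.val % 2 = 0 then 5 else 12)) ∈
        (Gh.map π.toEmbedding).neighborSet (Sum.inl w) := by
    intro y
    rw [SimpleGraph.mem_neighborSet, SimpleGraph.mem_neighborSet, map_adj_equiv,
      map_adj_equiv, hπsymm_inl, hπsymm_inl, hGh, hat_adj_inl_inl]
  have fT : ∀ y : Fin (2*k), y ∈ (Hk k).neighborSet w ↔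
      (Sum.inl y : Fin (2*k) ⊕ Σ w : Fin (2*k), Fin (if w.val % 2 = 0 then 5 else 12)) ∈
        Hh.neighborSet (Sum.inl w) := by
    intro y
    rw [SimpleGraph.mem_neighborSet, SimpleGraph.mem_neighborSet, hHh, hat_adj_inl_inl]
  have hsub : Sum.inl '' (symmDiff ((G.map σ.toEmbedding).neighborSet w)
      ((Hk k).neighborSet w)) ⊆
      symmDiff ((Gh.map π.toEmbedding).neighborSet (Sum.inl w))
        (Hh.neighborSet (Sum.inl w)) := by
    rintro z ⟨y, hy, rfl⟩
    rw [Set.mem_symmDiff] at hy ⊢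
    rcases hy with ⟨h1, h2⟩ | ⟨h1, h2⟩
    · exact Or.inl ⟨(fS y).mp h1, fun hc => h2 ((fT y).mpr hc)⟩
    · exact Or.inr ⟨(fT y).mp h1, fun hc => h2 ((fS y).mpr hc)⟩
  calc (symmDiff ((G.map σ.toEmbedding).neighborSet w) ((Hk k).neighborSet w)).ncard
      = (Sum.inl '' (symmDiff ((G.map σ.toEmbedding).neighborSet w)
          ((Hk k).neighborSet w))).ncard :=
        (Set.ncard_image_of_injective _ Sum.inl_injective).symm
    _ ≤ (symmDiff ((Gh.map π.toEmbedding).neighborSet (Sum.inl w))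
          (Hh.neighborSet (Sum.inl w))).ncard :=
        Set.ncard_le_ncard hsub (Set.toFinite _)
    _ ≤ 2 := hdel (Sum.inl w)

end HatCore

/-- Let `k ≥ 2` and `G` a 3-regular bipartite graph on `2k` vertices
with bipartition into independent sets `A, B` of size `k`. The following are equivalent:
(1) `G` has a Hamiltonian cycle; (2) there is `σ ∈ Res(G, H_k)` with `MMC(σ) ≤ 2`;
(3) there is a bijection `π : V(Ĝ) ≃ V(Ĥ)` between the pendant-leaf extensions with
`MMC(π) ≤ 2` (equivalently `δ₁(Ĝ, Ĥ) = δ_{|1|}(Ĝ, Ĥ) ≤ 2`, since the `ℓ₁`-operator norm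
of a mismatch equals its `MMC`). -/
theorem statement_13 {V : Type*} [Fintype V] [DecidableEq V] (k : ℕ) (hk : 2 ≤ k)
    (G : SimpleGraph V) [DecidableRel G.Adj] (A B : Finset V)
    (hcard : Fintype.card V = 2 * k) (hA : A.card = k) (hB : B.card = k)
    (hUnion : ∀ v, v ∈ A ∨ v ∈ B) (hDisj : Disjoint A B)
    (hreg : G.IsRegularOfDegree 3)
    (hAind : ∀ u ∈ A, ∀ v ∈ A, ¬ G.Adj u v) (hBind : ∀ u ∈ B, ∀ v ∈ B, ¬ G.Adj u v) :
    (G.IsHamiltonian ↔ ∃ σ : V ≃ Fin (2 * k), InRes k A σ ∧ MMC G (Hk k) σ ≤ 2) ∧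
    (G.IsHamiltonian ↔
      ∃ π : (V ⊕ Σ v : V, Fin (if v ∈ A then 5 else 12)) ≃
        (Fin (2 * k) ⊕ Σ w : Fin (2 * k), Fin (if w.val % 2 = 0 then 5 else 12)),
        MMC (hatGraph G (· ∈ A)) (hatGraph (Hk k) (fun w => w.val % 2 = 0)) π ≤ 2) := by
  have hk3 : 3 ≤ k := by
    obtain ⟨v, hv⟩ : A.Nonempty := by
      rw [← Finset.card_pos, hA]; omega
    have hnb : G.neighborFinset v ⊆ B := by
      intro u hu
      rw [SimpleGraph.mem_neighborFinset] at hu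
      rcases hUnion u with h | h
      · exact absurd hu (hAind v hv u h)
      · exact h
    have h1 : G.degree v ≤ B.card := Finset.card_le_card hnb
    rw [hreg v, hB] at h1
    omega
  haveI : NeZero (2*k) := ⟨by omega⟩
  have main1 : G.IsHamiltonian ↔ ∃ σ : V ≃ Fin (2 * k), InRes k A σ ∧ MMC G (Hk k) σ ≤ 2 := by
    constructor
    · intro hham
      obtain ⟨σ, hres, hcyc⟩ := exists_res_cyc hk3 hcard hUnion hAind hBind hham
      exact ⟨σ, hres, mmc_le_two hk3 hreg σ hcyc⟩
    · rintro ⟨σ, hres, hmmc⟩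
      have hcyc := cyc_of_mmc hk3 hUnion hAind hBind hreg σ hres hmmc
      exact isHamiltonian_of_cyc (n := 2*k) (by omega) (fun i => σ.symm i) σ.symm.bijective
        (fun i => hcyc i)
  refine ⟨main1, ?_, ?_⟩
  · intro hham
    obtain ⟨σ, hres, hmmc⟩ := main1.mp hham
    exact hat_forward hk3 hreg σ hres hmmc
  · rintro ⟨π, hmmc⟩
    obtain ⟨σ, hres, hmmc'⟩ := hat_backward hk3 hcard hreg π hmmc
    exact main1.mpr ⟨σ, hres, hmmc'⟩
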